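/- There exists a natural number N such that for all natural numbers n ≥ N and all real φ with 1 ≤ φ < log n / log log n, setting m = 12·⌈n^{1/(2φ)}⌉ and k = 24·⌈n^{1/φ}⌉ + 1, one has exp(−(m/2)·exp(−(2m−2)/(k−1))) ≤ 1/(2·n^{1/φ}). (Lower-endpoint evaluation in the proof of Lemma 1.) -/

import Mathlib

/-- lower-endpoint evaluation in the proof of Lemma 1.
For all sufficiently large `n` and all real `1 ≤ φ < log n / log log n`
(logs base 2), with `m = 12·⌈n^(1/(2φ))⌉` and `k = 24·⌈n^(1/φ)⌉ + 1`,
one has `exp(−(m/2)·exp(−(2m−2)/(k−1))) ≤ 1/(2·n^(1/φ))`. -/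
theorem lower_endpoint_eval :
    ∃ N : ℕ, ∀ n : ℕ, N ≤ n → ∀ φ : ℝ, 1 ≤ φ →
      φ < Real.logb 2 n / Real.logb 2 (Real.logb 2 n) →
      ∀ m k : ℝ, m = 12 * (⌈(n : ℝ) ^ (1 / (2 * φ))⌉₊ : ℝ) →
        k = 24 * (⌈(n : ℝ) ^ (1 / φ)⌉₊ : ℝ) + 1 →
        Real.exp (-(m / 2) * Real.exp (-(2 * m - 2) / (k - 1))) ≤
          1 / (2 * (n : ℝ) ^ (1 / φ)) := by
  use 65536
  intro n hn φ hφ hφ2 m k hm hk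
  have hn0 : (0:ℝ) < n := by
    have : (65536:ℝ) ≤ (n:ℝ) := by exact_mod_cast hn
    linarith
  have hn65536 : (65536:ℝ) ≤ (n:ℝ) := by exact_mod_cast hn
  have hφ0 : (0:ℝ) < φ := lt_of_lt_of_le one_pos hφ
  set x := (n:ℝ) ^ (1/(2*φ)) with hxdef
  set y := (n:ℝ) ^ (1/φ) with hydef
  have hx0 : 0 < x := Real.rpow_pos_of_pos hn0 _
  have hy0 : 0 < y := Real.rpow_pos_of_pos hn0 _
  have hxx : x * x = y := by
    rw [hxdef, hydef, ← Real.rpow_add hn0]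
    congr 1
    rw [← add_div]
    rw [show (1:ℝ) + 1 = 2 by norm_num]
    rw [mul_comm, div_mul_eq_div_div_swap]
    norm_num
  -- logb bounds
  have hL16 : (16:ℝ) ≤ Real.logb 2 n := by
    have h1 : Real.logb 2 (65536:ℝ) ≤ Real.logb 2 n :=
      Real.logb_le_logb_of_le (by norm_num) (by norm_num) hn65536
    have h2 : Real.logb 2 (65536:ℝ) = 16 := by
      have : ((65536:ℝ)) = (2:ℝ) ^ (16:ℝ) := by
        rw [show (16:ℝ) = ((16:ℕ):ℝ) by norm_num, Real.rpow_natCast]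
        norm_num
      rw [this, Real.logb_rpow (by norm_num) (by norm_num)]
    linarith
  have hL0 : 0 < Real.logb 2 n := by linarith
  have hLL0 : 0 < Real.logb 2 (Real.logb 2 n) := by
    have h1 : Real.logb 2 (16:ℝ) ≤ Real.logb 2 (Real.logb 2 n) :=
      Real.logb_le_logb_of_le (by norm_num) (by norm_num) hL16
    have h2 : Real.logb 2 (16:ℝ) = 4 := by
      have : ((16:ℝ)) = (2:ℝ) ^ (4:ℝ) := by
        rw [show (4:ℝ) = ((4:ℕ):ℝ) by norm_num, Real.rpow_natCast]
        norm_num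
      rw [this, Real.logb_rpow (by norm_num) (by norm_num)]
    linarith
  -- y > logb 2 n ≥ 16
  have hy_gt : Real.logb 2 n < y := by
    have h1 : φ * Real.logb 2 (Real.logb 2 n) < Real.logb 2 n :=
      (lt_div_iff₀ hLL0).mp hφ2
    have h2 : Real.logb 2 (Real.logb 2 n) < Real.logb 2 n / φ := by
      rw [lt_div_iff₀ hφ0]; nlinarith
    have hlogy : Real.logb 2 y = Real.logb 2 n / φ := by
      rw [hydef, Real.logb, Real.log_rpow hn0, Real.logb]; ring
    have h3 : (2:ℝ) ^ (Real.logb 2 (Real.logb 2 n)) < (2:ℝ) ^ (Real.logb 2 y) :=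
      (Real.rpow_lt_rpow_left_iff (by norm_num : (1:ℝ) < 2)).mpr
        (by rw [hlogy]; exact h2)
    rwa [Real.rpow_logb (by norm_num) (by norm_num) hL0,
      Real.rpow_logb (by norm_num) (by norm_num) hy0] at h3
  have hy16 : (16:ℝ) ≤ y := by linarith
  have hx4 : (4:ℝ) ≤ x := by nlinarith
  -- ceiling facts
  set a := (⌈x⌉₊ : ℝ) with hadef
  set b := (⌈y⌉₊ : ℝ) with hbdef
  have ha1 : x ≤ a := Nat.le_ceil x
  have ha2 : a < x + 1 := Nat.ceil_lt_add_one hx0.le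
  have hb1 : y ≤ b := Nat.le_ceil y
  clear hxdef hydef hadef hbdef hφ2 hn hn65536 hL16 hL0 hLL0 hy_gt
  clear_value x y a b
  -- the inner exponent is at most 1/2
  have ht : (2 * m - 2) / (k - 1) ≤ 1 / 2 := by
    rw [hm, hk]
    have hden : (0:ℝ) < 24 * b := by nlinarith
    rw [show 24 * b + 1 - 1 = 24 * b by ring, div_le_iff₀ hden]
    nlinarith
  -- inner exp at least 1/2
  have hE : (1:ℝ)/2 ≤ Real.exp (-(2 * m - 2) / (k - 1)) := by
    have h := Real.add_one_le_exp (-(2 * m - 2) / (k - 1))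
    have hneg : -(2 * m - 2) / (k - 1) = -((2 * m - 2) / (k - 1)) := by ring
    rw [hneg] at h ⊢
    linarith
  -- m/2 * E ≥ 3x
  have hmE : 3 * x ≤ (m / 2) * Real.exp (-(2 * m - 2) / (k - 1)) := by
    have hE0 : (0:ℝ) < Real.exp (-(2 * m - 2) / (k - 1)) := Real.exp_pos _
    have hm6 : 6 * x ≤ m / 2 := by rw [hm]; linarith
    nlinarith
  -- conclude
  have step1 : Real.exp (-(m / 2) * Real.exp (-(2 * m - 2) / (k - 1)))
      ≤ Real.exp (-(3 * x)) := by
    apply Real.exp_le_exp.mpr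
    linarith
  have step2 : 2 * y ≤ Real.exp (3 * x) := by
    have h3 : Real.exp (3 * x) = Real.exp x * Real.exp x * Real.exp x := by
      rw [← Real.exp_add, ← Real.exp_add]; ring_nf
    have hex : x + 1 ≤ Real.exp x := Real.add_one_le_exp x
    have hex0 : (0:ℝ) < Real.exp x := Real.exp_pos x
    rw [h3, ← hxx]
    nlinarith
  calc Real.exp (-(m / 2) * Real.exp (-(2 * m - 2) / (k - 1)))
      ≤ Real.exp (-(3 * x)) := step1
    _ = 1 / Real.exp (3 * x) := by rw [Real.exp_neg, one_div]
    _ ≤ 1 / (2 * y) := one_div_le_one_div_of_le (by nlinarith) step2
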